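/- Let ξ and ζ be nonnegative integer random variables such that ζ has finite exponential moments (i.e., P(ζ = k) = O(γ₁^k) for some 0 < γ₁ < 1) and let χ ≥ 0 be a real random variable with finite exponential moments. Then there exists 0 < γ₂ < 1 and C > 0 such that ∑_{k=0}^∞ P(ζ = k)·k·P(χ_1 + ... + χ_k ≥ h/2) ≤ C·γ₂^h for all h ≥ 0, where χ_1, χ_2, ... are i.i.d. copies of χ. -/

import Mathlib

open MeasureTheory ProbabilityTheory Finset

/-- Geometric decay of `P(ζ = k)` combined with i.i.d. nonnegative summands `χᵢ` having
finite exponential moments yields a geometric tail bound in `h` for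
`∑_k P(ζ = k) · k · P(χ₁ + … + χ_k ≥ h/2)`. -/
theorem mixed_sum_geometric_tail {Ω : Type*} [MeasurableSpace Ω] (μ : Measure Ω)
    [IsProbabilityMeasure μ] (ζ : Ω → ℕ) (hζ : Measurable ζ)
    (γ₁ C₁ : ℝ) (hγ₁0 : 0 < γ₁) (hγ₁1 : γ₁ < 1) (hC₁ : 0 < C₁)
    (hgeo : ∀ k : ℕ, (μ {ω | ζ ω = k}).toReal ≤ C₁ * γ₁ ^ k)
    (χ : ℕ → Ω → ℝ) (hχmeas : ∀ i, Measurable (χ i))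
    (hχnn : ∀ i ω, 0 ≤ χ i ω)
    (hχindep : iIndepFun χ μ)
    (hχident : ∀ i, IdentDistrib (χ i) (χ 0) μ μ)
    (hχexp : ∃ t > (0 : ℝ), Integrable (fun ω => Real.exp (t * χ 0 ω)) μ) :
    ∃ γ₂ : ℝ, 0 < γ₂ ∧ γ₂ < 1 ∧ ∃ C > (0 : ℝ), ∀ h : ℝ, 0 ≤ h →
      (∑' k : ℕ, (μ {ω | ζ ω = k}).toReal * k *
        (μ {ω | h / 2 ≤ ∑ i ∈ range k, χ i ω}).toReal) ≤
        C * Real.rpow γ₂ h := by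
  obtain ⟨t, ht, hint⟩ := hχexp
  -- integrability of `exp (s * χ 0)` for `0 ≤ s ≤ t`
  have hint_s : ∀ s : ℝ, 0 ≤ s → s ≤ t → Integrable (fun ω => Real.exp (s * χ 0 ω)) μ := by
    intro s _ hst
    refine hint.mono (((hχmeas 0).const_mul s).exp.aestronglyMeasurable) ?_
    filter_upwards with ω
    simp only [Real.norm_eq_abs, Real.abs_exp, Real.exp_le_exp]
    exact mul_le_mul_of_nonneg_right hst (hχnn 0 ω)
  -- `mgf (χ 0) μ (t / (n+1)) → 1`
  have htend : Filter.Tendsto (fun n : ℕ => mgf (χ 0) μ (t / (n + 1)))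
      Filter.atTop (nhds 1) := by
    have h1 : (∫ _ : Ω, (1 : ℝ) ∂μ) = 1 := by simp
    have h2 : Filter.Tendsto (fun n : ℕ => mgf (χ 0) μ (t / (n + 1)))
        Filter.atTop (nhds (∫ _ : Ω, (1 : ℝ) ∂μ)) := by
      refine tendsto_integral_of_dominated_convergence (fun ω => Real.exp (t * χ 0 ω))
        (fun n => (((hχmeas 0).const_mul _).exp.aestronglyMeasurable)) hint ?_ ?_
      · intro n
        filter_upwards with ω
        simp only [Real.norm_eq_abs, Real.abs_exp, Real.exp_le_exp]
        refine mul_le_mul_of_nonneg_right ?_ (hχnn 0 ω)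
        refine div_le_self ht.le ?_
        have : (0 : ℝ) ≤ (n : ℝ) := Nat.cast_nonneg n
        linarith
      · filter_upwards with ω
        have hdiv : Filter.Tendsto (fun n : ℕ => t / (n + 1)) Filter.atTop (nhds 0) := by
          have := Filter.Tendsto.comp (tendsto_const_div_atTop_nhds_zero_nat t)
            (Filter.tendsto_add_atTop_nat 1)
          simpa [Function.comp_def] using this
        have hcont : Continuous fun s : ℝ => Real.exp (s * χ 0 ω) :=
          Real.continuous_exp.comp (continuous_id.mul continuous_const)
        have := (hcont.tendsto 0).comp hdiv
        simpa [Function.comp_def] using this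
    simpa [h1] using h2
  -- choose `s` with `mgf (χ 0) μ s < 1/γ₁`
  have hone : (1 : ℝ) < 1 / γ₁ := (one_lt_div hγ₁0).mpr hγ₁1
  obtain ⟨n, hn⟩ := (htend.eventually_lt_const hone).exists
  set s : ℝ := t / (n + 1) with hs_def
  have hs : 0 < s := by positivity
  have hst : s ≤ t := by
    refine div_le_self ht.le ?_
    exact_mod_cast Nat.one_le_iff_ne_zero.mpr (Nat.succ_ne_zero n)
  set M : ℝ := mgf (χ 0) μ s with hM_def
  have hM0 : 0 ≤ M := mgf_nonneg
  have hr1 : γ₁ * M < 1 := by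
    have := hn
    rw [lt_div_iff₀ hγ₁0] at this
    linarith [this]
  set r : ℝ := γ₁ * M with hr_def
  have hr0 : 0 ≤ r := mul_nonneg hγ₁0.le hM0
  -- summability of `k * r^k`
  have hsum : Summable (fun k : ℕ => (k : ℝ) * r ^ k) := by
    have := summable_pow_mul_geometric_of_norm_lt_one (R := ℝ) 1
      (r := r) (by rwa [Real.norm_eq_abs, abs_of_nonneg hr0])
    simpa using this
  set S : ℝ := ∑' k : ℕ, (k : ℝ) * r ^ k with hS_def
  have hS0 : 0 ≤ S := tsum_nonneg fun k => by positivity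
  refine ⟨Real.exp (-(s / 2)), Real.exp_pos _, ?_, C₁ * S + 1, by positivity, ?_⟩
  · rw [Real.exp_lt_one_iff]; linarith
  intro h hh
  -- rewrite `γ₂ ^ h`
  have hrpow : Real.rpow (Real.exp (-(s / 2))) h = Real.exp (-(s / 2) * h) := by
    show Real.exp (-(s / 2)) ^ h = _
    rw [Real.rpow_def_of_pos (Real.exp_pos _), Real.log_exp]
  -- integrability for each i
  have hint_i : ∀ i, Integrable (fun ω => Real.exp (s * χ i ω)) μ := by
    intro i
    have hident := (hχident i).comp (u := fun x => Real.exp (s * x))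
      ((measurable_id.const_mul s).exp)
    exact hident.integrable_iff.mpr (hint_s s hs.le hst)
  have hmgf_i : ∀ i, mgf (χ i) μ s = M := by
    intro i
    have hident := (hχident i).comp (u := fun x => Real.exp (s * x))
      ((measurable_id.const_mul s).exp)
    exact hident.integral_eq
  -- Chernoff bound for each k
  have hPk : ∀ k : ℕ, (μ {ω | h / 2 ≤ ∑ i ∈ range k, χ i ω}).toReal ≤
      Real.exp (-s * (h / 2)) * M ^ k := by
    intro k
    have hintk : Integrable (fun ω => Real.exp (s * (∑ i ∈ range k, χ i) ω)) μ :=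
      hχindep.integrable_exp_mul_sum hχmeas fun i _ => hint_i i
    have hch := measure_ge_le_exp_mul_mgf (μ := μ) (X := ∑ i ∈ range k, χ i)
      (h / 2) hs.le hintk
    have hmgf : mgf (∑ i ∈ range k, χ i) μ s = M ^ k := by
      rw [hχindep.mgf_sum hχmeas (range k)]
      simp [hmgf_i]
    rw [hmgf] at hch
    have hset : {ω | h / 2 ≤ ∑ i ∈ range k, χ i ω} =
        {ω | h / 2 ≤ (∑ i ∈ range k, χ i) ω} := by
      ext ω; simp
    rw [hset]
    exact hch
  -- termwise bound
  have hterm : ∀ k : ℕ, (μ {ω | ζ ω = k}).toReal * k *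
      (μ {ω | h / 2 ≤ ∑ i ∈ range k, χ i ω}).toReal ≤
      C₁ * Real.exp (-(s / 2) * h) * ((k : ℝ) * r ^ k) := by
    intro k
    calc (μ {ω | ζ ω = k}).toReal * k *
        (μ {ω | h / 2 ≤ ∑ i ∈ range k, χ i ω}).toReal
        ≤ (C₁ * γ₁ ^ k) * k * (Real.exp (-s * (h / 2)) * M ^ k) := by
          have h1 := hgeo k
          have h2 := hPk k
          have hk0 : (0 : ℝ) ≤ (k : ℝ) := Nat.cast_nonneg k
          have hm1 : (0 : ℝ) ≤ (μ {ω | h / 2 ≤ ∑ i ∈ range k, χ i ω}).toReal :=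
            ENNReal.toReal_nonneg
          have hm2 : (0 : ℝ) ≤ (C₁ * γ₁ ^ k) * k := by positivity
          exact mul_le_mul (mul_le_mul_of_nonneg_right h1 hk0) h2 hm1 hm2
      _ = C₁ * Real.exp (-(s / 2) * h) * ((k : ℝ) * r ^ k) := by
          rw [hr_def, mul_pow]
          rw [show -s * (h / 2) = -(s / 2) * h by ring]
          ring
  have hsum2 : Summable (fun k : ℕ => C₁ * Real.exp (-(s / 2) * h) * ((k : ℝ) * r ^ k)) :=
    hsum.mul_left _
  have hle := Summable.tsum_le_tsum hterm
    (Summable.of_nonneg_of_le (fun k => by positivity) hterm hsum2) hsum2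
  rw [tsum_mul_left] at hle
  rw [hrpow]
  calc (∑' k : ℕ, (μ {ω | ζ ω = k}).toReal * k *
        (μ {ω | h / 2 ≤ ∑ i ∈ range k, χ i ω}).toReal)
      ≤ C₁ * Real.exp (-(s / 2) * h) * S := hle
    _ ≤ (C₁ * S + 1) * Real.exp (-(s / 2) * h) := by
        have he : (0 : ℝ) < Real.exp (-(s / 2) * h) := Real.exp_pos _
        nlinarith [he.le]
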